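/- Suppose a server offers rate-latency service curve β(t) = R·max(t−T, 0) to an aggregate of flows, each flow f having affine arrival curve α_f(t) = r_f·t + b_f with Σ_f r_f ≤ R. Consider a tagged packet n belonging to flow f. If for all m ≤ n the cumulative length of packets m,…,n−1 in the FIFO queue satisfies Σ_{k=m}^{n−1} l_k ≤ Σ_{f'} α_{f'}(A_n − A_m) − ψ, for some constant ψ ≥ 0, and there exists m ≤ n with β(Q_n − A_m) ≤ Σ_{k=m}^{n−1} l_k, then the queuing delay satisfies Q_n − A_n ≤ T + (Σ_{f'} b_{f'} − ψ)/R. -/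

import Mathlib

/-- Lemma 2: queuing-delay bound in a FIFO rate-latency server
with regulated affine inputs. -/
theorem cbfs_waiting_time_bound
    {ι : Type*} (F : Finset ι) (r b : ι → ℝ)
    (A l : ℕ → ℝ) (Q : ℕ → ℝ) (n : ℕ)
    (R T ψ : ℝ)
    (hR : 0 < R) (hT : 0 ≤ T) (hψ : 0 ≤ ψ)
    (hr : ∀ f ∈ F, 0 ≤ r f) (hb : ∀ f ∈ F, 0 ≤ b f)
    (hrate : (∑ f ∈ F, r f) ≤ R)
    (hA : Monotone A) (hl : ∀ k, 0 < l k)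
    (hQ : A n ≤ Q n)
    (harr : ∀ m ≤ n, (∑ k ∈ Finset.Ico m n, l k) ≤
        (∑ f ∈ F, (r f * (A n - A m) + b f)) - ψ)
    (hserv : ∃ m ≤ n, R * max (Q n - A m - T) 0 ≤ ∑ k ∈ Finset.Ico m n, l k) :
    Q n - A n ≤ T + ((∑ f ∈ F, b f) - ψ) / R := by
  obtain ⟨m, hmn, hs⟩ := hserv
  have hAm : A m ≤ A n := hA hmn
  have h1 : R * (Q n - A m - T) ≤ ∑ k ∈ Finset.Ico m n, l k :=
    le_trans (mul_le_mul_of_nonneg_left (le_max_left _ _) hR.le) hs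
  have h2 : ∑ k ∈ Finset.Ico m n, l k ≤
      (∑ f ∈ F, r f) * (A n - A m) + (∑ f ∈ F, b f) - ψ := by
    have := harr m hmn
    simpa [Finset.sum_add_distrib, ← Finset.sum_mul, add_sub_assoc] using this
  have h3 : (∑ f ∈ F, r f) * (A n - A m) ≤ R * (A n - A m) :=
    mul_le_mul_of_nonneg_right hrate (by linarith)
  have h4 : R * (Q n - A m - T) ≤ R * (A n - A m) + (∑ f ∈ F, b f) - ψ := by
    linarith
  have h5 : Q n - A n - T ≤ ((∑ f ∈ F, b f) - ψ) / R := by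
    rw [le_div_iff₀ hR]; nlinarith
  linarith
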